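/- Let σ* = (x*, y*) be a Nash equilibrium of the game given by U, let μ > 0, let σ^r ∈ Δ^n × Δ^m be a reference profile, and let σ̂ = (x̂, ŷ) be a saddle point of the corresponding SCCP. Then ‖σ* − σ̂‖₂ ≤ ‖σ* − σ^r‖₂, where profiles are identified with vectors in ℝ^{n+m}. -/
import Mathlib


open Finset

/-- Squared Euclidean norm of a vector. -/
noncomputable def sqnorm {k : ℕ} (v : Fin k → ℝ) : ℝ := ∑ i, (v i) ^ 2

/-- Euclidean norm of a concatenated profile vector in ℝ^(k+l). -/
noncomputable def pnorm {k l : ℕ} (v : Fin k → ℝ) (w : Fin l → ℝ) : ℝ :=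
  Real.sqrt (sqnorm v + sqnorm w)

/-- Bilinear payoff xᵀUy. -/
def payoff {k l : ℕ} (U : Matrix (Fin k) (Fin l) ℝ) (x : Fin k → ℝ) (y : Fin l → ℝ) : ℝ :=
  ∑ i, ∑ j, x i * U i j * y j

/-- Regularized SCCP objective G(x,y) = -xᵀUy + μ/2 ‖x - xʳ‖² - μ/2 ‖y - yʳ‖². -/
noncomputable def sccpObj {k l : ℕ} (U : Matrix (Fin k) (Fin l) ℝ) (μ : ℝ)
    (xr : Fin k → ℝ) (yr : Fin l → ℝ) (x : Fin k → ℝ) (y : Fin l → ℝ) : ℝ :=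
  -(payoff U x y) + μ / 2 * sqnorm (x - xr) - μ / 2 * sqnorm (y - yr)

/-- (x̂, ŷ) is a saddle point of the SCCP with weight μ and reference (xr, yr). -/
def IsSaddle {k l : ℕ} (U : Matrix (Fin k) (Fin l) ℝ) (μ : ℝ)
    (xr : Fin k → ℝ) (yr : Fin l → ℝ) (xh : Fin k → ℝ) (yh : Fin l → ℝ) : Prop :=
  xh ∈ stdSimplex ℝ (Fin k) ∧ yh ∈ stdSimplex ℝ (Fin l) ∧
  (∀ y ∈ stdSimplex ℝ (Fin l), sccpObj U μ xr yr xh y ≤ sccpObj U μ xr yr xh yh) ∧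
  (∀ x ∈ stdSimplex ℝ (Fin k), sccpObj U μ xr yr xh yh ≤ sccpObj U μ xr yr x yh)

/-- (x*, y*) is a Nash equilibrium of the zero-sum game with payoff matrix U. -/
def IsNash {k l : ℕ} (U : Matrix (Fin k) (Fin l) ℝ)
    (xs : Fin k → ℝ) (ys : Fin l → ℝ) : Prop :=
  xs ∈ stdSimplex ℝ (Fin k) ∧ ys ∈ stdSimplex ℝ (Fin l) ∧
  (∀ x ∈ stdSimplex ℝ (Fin k), payoff U x ys ≤ payoff U xs ys) ∧
  (∀ y ∈ stdSimplex ℝ (Fin l), payoff U xs ys ≤ payoff U xs y)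

/-- Exploitability ε(σ) = max_{x'} x'ᵀUy - min_{y'} xᵀUy'. -/
noncomputable def exploit {k l : ℕ} (U : Matrix (Fin k) (Fin l) ℝ)
    (x : Fin k → ℝ) (y : Fin l → ℝ) : ℝ :=
  sSup ((fun x' => payoff U x' y) '' stdSimplex ℝ (Fin k)) -
  sInf ((fun y' => payoff U x y') '' stdSimplex ℝ (Fin l))

/-- Transformed loss for the x-player: ℓ_x = -Uy + μ(x - xʳ). -/
noncomputable def lossX {k l : ℕ} (U : Matrix (Fin k) (Fin l) ℝ) (μ : ℝ)
    (xr : Fin k → ℝ) (x : Fin k → ℝ) (y : Fin l → ℝ) : Fin k → ℝ :=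
  fun i => -(∑ j, U i j * y j) + μ * (x i - xr i)

/-- Transformed loss for the y-player: ℓ_y = Uᵀx + μ(y - yʳ). -/
noncomputable def lossY {k l : ℕ} (U : Matrix (Fin k) (Fin l) ℝ) (μ : ℝ)
    (yr : Fin l → ℝ) (x : Fin k → ℝ) (y : Fin l → ℝ) : Fin l → ℝ :=
  fun j => (∑ i, U i j * x i) + μ * (y j - yr j)

/-- Immediate regret r = ⟨ℓ, p⟩·𝟏 - ℓ. -/
noncomputable def imRegret {k : ℕ} (ℓ : Fin k → ℝ) (p : Fin k → ℝ) : Fin k → ℝ :=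
  fun i => (∑ i', ℓ i' * p i') - ℓ i

lemma key_nonneg (a b : ℝ) (hb : 0 ≤ b)
    (h : ∀ t : ℝ, 0 < t → t ≤ 1 → 0 ≤ a * t + b * t ^ 2) : 0 ≤ a := by
  by_contra h'
  push_neg at h'
  have hden : (0:ℝ) < 2 * b + 1 := by linarith
  set t : ℝ := min 1 (-a / (2 * b + 1)) with ht
  have ht0 : 0 < t := lt_min one_pos (div_pos (by linarith) hden)
  have ht1 : t ≤ 1 := min_le_left _ _
  have ht2 : t * (2 * b + 1) ≤ -a := by
    rw [← le_div_iff₀ hden]; exact min_le_right _ _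
  have h3 := h t ht0 ht1
  nlinarith [mul_pos ht0 ht0, mul_nonneg hb ht0.le, mul_nonneg (mul_nonneg hb ht0.le) ht0.le]

lemma sqnorm_nonneg {k : ℕ} (v : Fin k → ℝ) : 0 ≤ sqnorm v :=
  Finset.sum_nonneg fun i _ => sq_nonneg _

lemma sqnorm_add_smul {k : ℕ} (u d : Fin k → ℝ) (t : ℝ) :
    sqnorm (u + t • d) = sqnorm u + 2 * t * (∑ i, u i * d i) + t ^ 2 * sqnorm d := by
  simp only [sqnorm, Finset.mul_sum, ← Finset.sum_add_distrib]
  exact Finset.sum_congr rfl fun i _ => by simp [Pi.add_apply]; ring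

lemma payoff_add_smul_left {k l : ℕ} (U : Matrix (Fin k) (Fin l) ℝ)
    (x d : Fin k → ℝ) (y : Fin l → ℝ) (t : ℝ) :
    payoff U (x + t • d) y = payoff U x y + t * payoff U d y := by
  simp only [payoff, Finset.mul_sum, ← Finset.sum_add_distrib]
  exact Finset.sum_congr rfl fun i _ =>
    Finset.sum_congr rfl fun j _ => by simp [Pi.add_apply]; ring

lemma payoff_add_smul_right {k l : ℕ} (U : Matrix (Fin k) (Fin l) ℝ)
    (x : Fin k → ℝ) (y e : Fin l → ℝ) (t : ℝ) :
    payoff U x (y + t • e) = payoff U x y + t * payoff U x e := by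
  simp only [payoff, Finset.mul_sum, ← Finset.sum_add_distrib]
  exact Finset.sum_congr rfl fun i _ =>
    Finset.sum_congr rfl fun j _ => by simp [Pi.add_apply]; ring

lemma payoff_sub_left {k l : ℕ} (U : Matrix (Fin k) (Fin l) ℝ)
    (x x' : Fin k → ℝ) (y : Fin l → ℝ) :
    payoff U (x - x') y = payoff U x y - payoff U x' y := by
  simp only [payoff, ← Finset.sum_sub_distrib]
  exact Finset.sum_congr rfl fun i _ =>
    Finset.sum_congr rfl fun j _ => by simp [Pi.sub_apply]; ring

lemma payoff_sub_right {k l : ℕ} (U : Matrix (Fin k) (Fin l) ℝ)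
    (x : Fin k → ℝ) (y y' : Fin l → ℝ) :
    payoff U x (y - y') = payoff U x y - payoff U x y' := by
  simp only [payoff, ← Finset.sum_sub_distrib]
  exact Finset.sum_congr rfl fun i _ =>
    Finset.sum_congr rfl fun j _ => by simp [Pi.sub_apply]; ring

/-- The SCCP saddle point is at least as close to the NE as the reference strategy. -/
theorem saddle_closer_than_reference
    {n m : ℕ} (hn : 0 < n) (hm : 0 < m)
    (U : Matrix (Fin n) (Fin m) ℝ) (μ : ℝ) (hμ : 0 < μ)
    (xs : Fin n → ℝ) (ys : Fin m → ℝ) (hNE : IsNash U xs ys)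
    (xr : Fin n → ℝ) (yr : Fin m → ℝ)
    (hxr : xr ∈ stdSimplex ℝ (Fin n)) (hyr : yr ∈ stdSimplex ℝ (Fin m))
    (xh : Fin n → ℝ) (yh : Fin m → ℝ)
    (hsad : IsSaddle U μ xr yr xh yh) :
    pnorm (xs - xh) (ys - yh) ≤ pnorm (xs - xr) (ys - yr) := by
  obtain ⟨hxs, hys, hNx, hNy⟩ := hNE
  obtain ⟨hxh, hyh, hSy, hSx⟩ := hsad
  set d : Fin n → ℝ := xs - xh with hd
  set e : Fin m → ℝ := ys - yh with he
  -- x-side first order condition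
  have hx : 0 ≤ -(payoff U d yh) + μ * (∑ i, (xh - xr) i * d i) := by
    apply key_nonneg _ (μ / 2 * sqnorm d)
      (mul_nonneg (by linarith) (sqnorm_nonneg d))
    intro t ht0 ht1
    have hmem : xh + t • d ∈ stdSimplex ℝ (Fin n) := by
      have h2 := (convex_stdSimplex ℝ (Fin n)) hxh hxs
        (by linarith : (0:ℝ) ≤ 1 - t) ht0.le (by ring)
      convert h2 using 1
      funext i
      simp [hd, Pi.smul_apply, smul_eq_mul]
      ring
    have h1 := hSx _ hmem
    have e2 : (xh + t • d) - xr = (xh - xr) + t • d := by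
      funext i; simp; ring
    rw [sccpObj, sccpObj, payoff_add_smul_left, e2, sqnorm_add_smul] at h1
    nlinarith [h1]
  -- y-side first order condition
  have hy : 0 ≤ payoff U xh e + μ * (∑ j, (yh - yr) j * e j) := by
    apply key_nonneg _ (μ / 2 * sqnorm e)
      (mul_nonneg (by linarith) (sqnorm_nonneg e))
    intro t ht0 ht1
    have hmem : yh + t • e ∈ stdSimplex ℝ (Fin m) := by
      have h2 := (convex_stdSimplex ℝ (Fin m)) hyh hys
        (by linarith : (0:ℝ) ≤ 1 - t) ht0.le (by ring)
      convert h2 using 1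
      funext j
      simp [he, Pi.smul_apply, smul_eq_mul]
      ring
    have h1 := hSy _ hmem
    have e2 : (yh + t • e) - yr = (yh - yr) + t • e := by
      funext j; simp; ring
    rw [sccpObj, sccpObj, payoff_add_smul_right, e2, sqnorm_add_smul] at h1
    nlinarith [h1]
  -- Nash inequalities
  have hN1 : payoff U xh ys ≤ payoff U xs ys := hNx xh hxh
  have hN2 : payoff U xs ys ≤ payoff U xs yh := hNy yh hyh
  have hp1 : payoff U d yh = payoff U xs yh - payoff U xh yh := payoff_sub_left U xs xh yh
  have hp2 : payoff U xh e = payoff U xh ys - payoff U xh yh := payoff_sub_right U xh ys yh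
  -- combine: the cross inner product is nonnegative
  have hS : 0 ≤ (∑ i, (xh - xr) i * d i) + (∑ j, (yh - yr) j * e j) := by
    have hsum : 0 ≤ μ * ((∑ i, (xh - xr) i * d i) + (∑ j, (yh - yr) j * e j)) := by
      nlinarith [hx, hy]
    exact nonneg_of_mul_nonneg_right hsum hμ
  -- expand squared norms
  have ex : sqnorm (xs - xr) = sqnorm (xh - xr) + 2 * 1 * (∑ i, (xh - xr) i * d i)
      + 1 ^ 2 * sqnorm d := by
    rw [← sqnorm_add_smul]
    congr 1
    funext i
    simp only [Pi.add_apply, Pi.sub_apply, Pi.smul_apply, smul_eq_mul, hd]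
    ring
  have ey : sqnorm (ys - yr) = sqnorm (yh - yr) + 2 * 1 * (∑ j, (yh - yr) j * e j)
      + 1 ^ 2 * sqnorm e := by
    rw [← sqnorm_add_smul]
    congr 1
    funext j
    simp only [Pi.add_apply, Pi.sub_apply, Pi.smul_apply, smul_eq_mul, he]
    ring
  have hfinal : sqnorm d + sqnorm e ≤ sqnorm (xs - xr) + sqnorm (ys - yr) := by
    have := sqnorm_nonneg (xh - xr)
    have := sqnorm_nonneg (yh - yr)
    rw [ex, ey]; linarith
  rw [pnorm, pnorm]
  exact Real.sqrt_le_sqrt hfinal
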